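/- Let 𝔨 be a Lie algebra with ad-invariant inner product B and orthonormal basis k₁,…,k_l, and let φ : 𝔨 → 𝔰𝔬(𝔪) be a faithful Lie algebra representation on an inner product space 𝔪. Identify φ(kᵢ) with a 2-form on 𝔪 and let n₁,…,n_l be the corresponding basis of a copy 𝔫 of 𝔨. Then the 3-form Σᵢ φ(kᵢ) ∧ nᵢ on 𝔫 ⊕ 𝔪 is invariant under the diagonal action ψ(k) = ad(k) ⊕ φ(k) for all k ∈ 𝔨, i.e., ψ(k) · (Σᵢ φ(kᵢ) ∧ nᵢ) = 0. -/

import Mathlib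

open scoped RealInnerProductSpace BigOperators

/-- The 3-form `Σᵢ φ(kᵢ) ∧ nᵢ` on `𝔫 ⊕ 𝔪` (modelled as `K × M`), where the 2-form
`φ(kᵢ)` lives on the `𝔪`-part and the 1-form `nᵢ = B(kᵢ, ·)` on the `𝔫`-part. -/
noncomputable def thetaForm {K M : Type*} [LieRing K] [LieAlgebra ℝ K]
    [NormedAddCommGroup M] [InnerProductSpace ℝ M] {l : ℕ}
    (B : K →ₗ[ℝ] K →ₗ[ℝ] ℝ) (k : Fin l → K) (φ : K →ₗ[ℝ] M →ₗ[ℝ] M)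
    (u v w : K × M) : ℝ :=
  ∑ i : Fin l,
    (⟪φ (k i) u.2, v.2⟫ * B (k i) w.1 + ⟪φ (k i) v.2, w.2⟫ * B (k i) u.1 +
      ⟪φ (k i) w.2, u.2⟫ * B (k i) v.1)

/-- The diagonal representation `ψ(k) = ad(k) ⊕ φ(k)` on `𝔫 ⊕ 𝔪 = K × M`. -/
def psiAct {K M : Type*} [LieRing K] [LieAlgebra ℝ K]
    [NormedAddCommGroup M] [InnerProductSpace ℝ M]
    (φ : K →ₗ[ℝ] M →ₗ[ℝ] M) (c : K) (u : K × M) : K × M :=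
  (⁅c, u.1⁆, φ c u.2)

private lemma key_lemma
    {K M : Type*} [LieRing K] [LieAlgebra ℝ K]
    [NormedAddCommGroup M] [InnerProductSpace ℝ M] {l : ℕ}
    (B : K →ₗ[ℝ] K →ₗ[ℝ] ℝ)
    (hsymm : ∀ x y : K, B x y = B y x)
    (hinv : ∀ z x y : K, B ⁅z, x⁆ y + B x ⁅z, y⁆ = 0)
    (k : Fin l → K)
    (hcomplete : ∀ x : K, ∑ i : Fin l, B x (k i) • k i = x)
    (φ : K →ₗ[ℝ] M →ₗ[ℝ] M)
    (hφLie : ∀ a b : K, φ ⁅a, b⁆ = φ a ∘ₗ φ b - φ b ∘ₗ φ a)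
    (hφskew : ∀ (a : K) (x y : M), ⟪φ a x, y⟫ = -⟪x, φ a y⟫)
    (c : K) (x y : M) (z : K) :
    ∑ i : Fin l, (⟪φ (k i) (φ c x), y⟫ * B (k i) z + ⟪φ (k i) x, φ c y⟫ * B (k i) z
        + ⟪φ (k i) x, y⟫ * B (k i) ⁅c, z⁆) = 0 := by
  have h1 : ∀ i, ⟪φ (k i) (φ c x), y⟫ + ⟪φ (k i) x, φ c y⟫ = -⟪φ ⁅c, k i⁆ x, y⟫ := by
    intro i
    have hx : φ ⁅c, k i⁆ x = φ c (φ (k i) x) - φ (k i) (φ c x) := by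
      rw [hφLie c (k i)]; rfl
    have hs : ⟪φ (k i) x, φ c y⟫ = -⟪φ c (φ (k i) x), y⟫ := by
      rw [hφskew c (φ (k i) x) y]; ring
    rw [hx, inner_sub_left]; linarith
  have h2 : ∀ i, B (k i) ⁅c, z⁆ = - B ⁅c, k i⁆ z := by
    intro i; linarith [hinv c (k i) z]
  have h3 : ∀ i, ⟪φ ⁅c, k i⁆ x, y⟫ = ∑ j : Fin l, B ⁅c, k i⁆ (k j) * ⟪φ (k j) x, y⟫ := by
    intro i
    conv_lhs => rw [← hcomplete ⁅c, k i⁆]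
    rw [map_sum, LinearMap.coe_sum, Finset.sum_apply, sum_inner]
    refine Finset.sum_congr rfl fun j _ => ?_
    rw [map_smul, LinearMap.smul_apply, real_inner_smul_left]
  have h4 : ∀ i, B ⁅c, k i⁆ z = ∑ j : Fin l, B ⁅c, k i⁆ (k j) * B (k j) z := by
    intro i
    conv_lhs => rw [← hcomplete ⁅c, k i⁆]
    simp only [map_sum, map_smul, LinearMap.smul_apply, LinearMap.coe_sum,
      Finset.sum_apply, smul_eq_mul]
  have hanti : ∀ i j, B ⁅c, k i⁆ (k j) = - B ⁅c, k j⁆ (k i) := by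
    intro i j
    have := hinv c (k i) (k j)
    rw [hsymm (k i) ⁅c, k j⁆] at this
    linarith
  have step : ∀ i, ⟪φ (k i) (φ c x), y⟫ * B (k i) z + ⟪φ (k i) x, φ c y⟫ * B (k i) z
      + ⟪φ (k i) x, y⟫ * B (k i) ⁅c, z⁆
      = ∑ j : Fin l, (- (B ⁅c, k i⁆ (k j) *
          (⟪φ (k j) x, y⟫ * B (k i) z + ⟪φ (k i) x, y⟫ * B (k j) z))) := by
    intro i
    have e1 : ⟪φ (k i) (φ c x), y⟫ * B (k i) z + ⟪φ (k i) x, φ c y⟫ * B (k i) z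
        + ⟪φ (k i) x, y⟫ * B (k i) ⁅c, z⁆
        = -⟪φ ⁅c, k i⁆ x, y⟫ * B (k i) z - ⟪φ (k i) x, y⟫ * B ⁅c, k i⁆ z := by
      linear_combination (B (k i) z) * h1 i + (inner ℝ ((φ (k i)) x) y : ℝ) * h2 i
    rw [e1, h3 i, h4 i, Finset.mul_sum, neg_mul, Finset.sum_mul, ← Finset.sum_neg_distrib,
      ← Finset.sum_sub_distrib]
    exact Finset.sum_congr rfl fun j _ => by ring
  rw [Finset.sum_congr rfl fun i _ => step i]
  have hswap : ∀ i j : Fin l,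
      (- (B ⁅c, k i⁆ (k j) * (⟪φ (k j) x, y⟫ * B (k i) z + ⟪φ (k i) x, y⟫ * B (k j) z)))
      = - (- (B ⁅c, k j⁆ (k i) *
          (⟪φ (k i) x, y⟫ * B (k j) z + ⟪φ (k j) x, y⟫ * B (k i) z))) := by
    intro i j; rw [hanti i j]; ring
  have : (∑ i : Fin l, ∑ j : Fin l,
      (- (B ⁅c, k i⁆ (k j) * (⟪φ (k j) x, y⟫ * B (k i) z + ⟪φ (k i) x, y⟫ * B (k j) z))))
      = - ∑ i : Fin l, ∑ j : Fin l,
      (- (B ⁅c, k i⁆ (k j) * (⟪φ (k j) x, y⟫ * B (k i) z + ⟪φ (k i) x, y⟫ * B (k j) z))) := by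
    conv_lhs => rw [Finset.sum_comm]
    rw [← Finset.sum_neg_distrib]
    refine Finset.sum_congr rfl fun j _ => ?_
    rw [← Finset.sum_neg_distrib]
    exact Finset.sum_congr rfl fun i _ => hswap i j
  linarith

/-- The 3-form `Σᵢ φ(kᵢ) ∧ nᵢ` on `𝔫 ⊕ 𝔪` is invariant under the
diagonal action `ψ(k) = ad(k) ⊕ φ(k)` for every `k ∈ 𝔨`. -/
theorem theta_form_invariant
    {K M : Type*} [LieRing K] [LieAlgebra ℝ K]
    [NormedAddCommGroup M] [InnerProductSpace ℝ M] {l : ℕ}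
    (B : K →ₗ[ℝ] K →ₗ[ℝ] ℝ)
    (hsymm : ∀ x y : K, B x y = B y x)
    (hpos : ∀ x : K, x ≠ 0 → 0 < B x x)
    (hinv : ∀ z x y : K, B ⁅z, x⁆ y + B x ⁅z, y⁆ = 0)
    (k : Fin l → K)
    (horth : ∀ i j, B (k i) (k j) = if i = j then (1 : ℝ) else 0)
    (hcomplete : ∀ x : K, ∑ i : Fin l, B x (k i) • k i = x)
    (φ : K →ₗ[ℝ] M →ₗ[ℝ] M)
    (hφLie : ∀ a b : K, φ ⁅a, b⁆ = φ a ∘ₗ φ b - φ b ∘ₗ φ a)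
    (hφskew : ∀ (a : K) (x y : M), ⟪φ a x, y⟫ = -⟪x, φ a y⟫)
    (hφinj : Function.Injective φ) :
    ∀ (c : K) (u v w : K × M),
      thetaForm B k φ (psiAct φ c u) v w + thetaForm B k φ u (psiAct φ c v) w +
        thetaForm B k φ u v (psiAct φ c w) = 0 := by
  intro c u v w
  have K1 := key_lemma B hsymm hinv k hcomplete φ hφLie hφskew c u.2 v.2 w.1
  have K2 := key_lemma B hsymm hinv k hcomplete φ hφLie hφskew c v.2 w.2 u.1
  have K3 := key_lemma B hsymm hinv k hcomplete φ hφLie hφskew c w.2 u.2 v.1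
  simp only [thetaForm, psiAct]
  rw [← Finset.sum_add_distrib, ← Finset.sum_add_distrib]
  have hsum : ∑ i : Fin l,
      ((⟪φ (k i) (φ c u.2), v.2⟫ * B (k i) w.1 + ⟪φ (k i) u.2, φ c v.2⟫ * B (k i) w.1
          + ⟪φ (k i) u.2, v.2⟫ * B (k i) ⁅c, w.1⁆)
        + (⟪φ (k i) (φ c v.2), w.2⟫ * B (k i) u.1 + ⟪φ (k i) v.2, φ c w.2⟫ * B (k i) u.1
          + ⟪φ (k i) v.2, w.2⟫ * B (k i) ⁅c, u.1⁆)
        + (⟪φ (k i) (φ c w.2), u.2⟫ * B (k i) v.1 + ⟪φ (k i) w.2, φ c u.2⟫ * B (k i) v.1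
          + ⟪φ (k i) w.2, u.2⟫ * B (k i) ⁅c, v.1⁆)) = 0 := by
    rw [Finset.sum_add_distrib, Finset.sum_add_distrib, K1, K2, K3]; ring
  rw [← hsum]
  exact Finset.sum_congr rfl fun i _ => by ring
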